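/- Suppose x* is an optimal solution of the Held–Karp relaxation for the connected Q-join problem, T is a spanning tree, y ∈ ℝ^E_{≥0}, and ε > 0, such that: (1) for every narrow cut C of x* (i.e., x*(δ(C)) < 2), either |T ∩ δ(C)| is odd or y(δ(C)) ≥ 1/ε. Then the point z := (x* + ε·y)/2 lies in the dominant of the Q_T-join polytope, i.e., z ≥ 0 and z(δ(C)) ≥ 1 for every Q_T-cut C, where Q_T = odd(T) △ Q. -/

import Mathlib

open scoped Classical

noncomputable section

variable {V : Type*}

/-- An edge crosses the cut `S` if it has exactly one endpoint in `S`. -/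
def crossing [DecidableEq V] (S : Finset V) (e : Sym2 V) : Prop :=
  ∃ u v, e = s(u, v) ∧ u ∈ S ∧ v ∉ S

/-- The edges of `T` crossing the cut `S`. -/
def cutEdges [DecidableEq V] (S : Finset V) (T : Finset (Sym2 V)) :
    Finset (Sym2 V) :=
  T.filter (crossing S)

/-- The value `x(δ(S))` of a cut: the sum of `x` over the edges of the complete
graph crossing `S`. -/
def cutVal [Fintype V] [DecidableEq V] (x : Sym2 V → ℝ) (S : Finset V) : ℝ :=
  ∑ e ∈ Finset.univ.filter (crossing S), x e

/-- `T` is (the edge set of) a spanning tree of `G`: its edges are edges of `G`,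
it is connected as a spanning subgraph, and it has `|V| - 1` edges. -/
def IsSpanningTree [Fintype V] (G : SimpleGraph V) (T : Finset (Sym2 V)) : Prop :=
  ↑T ⊆ G.edgeSet ∧ (SimpleGraph.fromEdgeSet (↑T : Set (Sym2 V))).Connected ∧
    T.card = Fintype.card V - 1

/-- Degree of a vertex with respect to an edge set. -/
def degE (T : Finset (Sym2 V)) (v : V) : ℕ := (T.filter (fun e => v ∈ e)).card

/-- The set of vertices of odd degree with respect to an edge set. -/
def oddVerts [Fintype V] (T : Finset (Sym2 V)) : Finset V :=
  Finset.univ.filter (fun v => Odd (degE T v))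

lemma crossing_iff [DecidableEq V] (S : Finset V) (u w : V) :
    crossing S s(u, w) ↔ ((u ∈ S ∧ w ∉ S) ∨ (w ∈ S ∧ u ∉ S)) := by
  constructor
  · rintro ⟨a, b, hab, ha, hb⟩
    rw [Sym2.eq_iff] at hab
    rcases hab with ⟨rfl, rfl⟩ | ⟨rfl, rfl⟩
    · exact Or.inl ⟨ha, hb⟩
    · exact Or.inr ⟨ha, hb⟩
  · rintro (⟨h1, h2⟩ | ⟨h1, h2⟩)
    · exact ⟨u, w, rfl, h1, h2⟩
    · exact ⟨w, u, Sym2.eq_swap, h1, h2⟩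

lemma count_card [DecidableEq V] (C : Finset V) (u w : V) (huw : u ≠ w) :
    (C.filter (fun v => v ∈ s(u, w))).card
      = (if u ∈ C then 1 else 0) + (if w ∈ C then 1 else 0) := by
  have : (C.filter (fun v => v ∈ s(u, w))) = C ∩ {u, w} := by
    ext v
    simp [Sym2.mem_iff, Finset.mem_inter, Finset.mem_insert, and_comm]
  rw [this]
  rw [Finset.inter_comm]
  by_cases hu : u ∈ C <;> by_cases hw : w ∈ C <;>
    simp [Finset.insert_inter_of_mem, Finset.insert_inter_of_notMem,
      Finset.singleton_inter_of_mem, Finset.singleton_inter_of_notMem,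
      hu, hw, Finset.card_pair huw]

lemma parity_cut [Fintype V] [DecidableEq V] (C : Finset V) (T : Finset (Sym2 V))
    (hT : ∀ e ∈ T, ¬ e.IsDiag) :
    (Odd (C ∩ oddVerts T).card ↔ Odd (cutEdges C T).card) := by
  have key : ∑ v ∈ C, degE T v = ∑ e ∈ T, (C.filter (fun v => v ∈ e)).card := by
    have : ∀ v, degE T v = ∑ e ∈ T, if v ∈ e then 1 else 0 := by
      intro v
      rw [degE, Finset.card_filter]
      exact Finset.sum_congr rfl (fun e _ => by split <;> simp_all)
    simp_rw [this]
    rw [Finset.sum_comm]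
    congr 1; ext e
    rw [Finset.card_filter]
  have h1 : Odd (∑ v ∈ C, degE T v) ↔ Odd (C ∩ oddVerts T).card := by
    rw [Finset.odd_sum_iff_odd_card_odd]
    congr! 2
    ext v
    simp [oddVerts, Finset.mem_filter]
  have h2 : Odd (∑ e ∈ T, (C.filter (fun v => v ∈ e)).card) ↔ Odd (cutEdges C T).card := by
    rw [Finset.odd_sum_iff_odd_card_odd]
    congr! 2
    apply Finset.filter_congr
    intro e he
    induction e using Sym2.inductionOn with
    | hf u w =>
      have huw : u ≠ w := by simpa [Sym2.isDiag_iff_proj_eq] using hT _ he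
      rw [count_card C u w huw, crossing_iff]
      by_cases hu : u ∈ C <;> by_cases hw : w ∈ C <;> simp [hu, hw]
  rw [← h1, key, h2]

lemma oddVerts_even [Fintype V] [DecidableEq V] (T : Finset (Sym2 V))
    (hT : ∀ e ∈ T, ¬ e.IsDiag) : Even (oddVerts T).card := by
  have := parity_cut Finset.univ T hT
  rw [Finset.univ_inter] at this
  have hcut : cutEdges Finset.univ T = ∅ := by
    apply Finset.filter_false_of_mem
    rintro e - ⟨u, v, -, -, hv⟩
    exact hv (Finset.mem_univ v)
  rw [hcut] at this
  have h : ¬ Odd (oddVerts T).card := fun h => by simpa using this.mp h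
  exact Nat.not_odd_iff_even.mp h

lemma card_symmDiff_eq [DecidableEq V] (s t : Finset V) :
    (symmDiff s t).card + 2 * (s ∩ t).card = s.card + t.card := by
  have h1 : (s \ t).card + (s ∩ t).card = s.card := Finset.card_sdiff_add_card_inter s t
  have h2 : (t \ s).card + (t ∩ s).card = t.card := Finset.card_sdiff_add_card_inter t s
  have h3 : (symmDiff s t).card = (s \ t).card + (t \ s).card := by
    rw [symmDiff_def, Finset.sup_eq_union]
    exact Finset.card_union_of_disjoint disjoint_sdiff_sdiff
  rw [Finset.inter_comm t s] at h2
  omega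

lemma odd_symmDiff_card [DecidableEq V] (s t : Finset V) :
    Odd (symmDiff s t).card ↔ ¬ (Odd s.card ↔ Odd t.card) := by
  have := card_symmDiff_eq s t
  rcases Nat.even_or_odd s.card with hs | hs <;>
    rcases Nat.even_or_odd t.card with ht | ht <;>
      simp [Nat.odd_iff, Nat.even_iff] at * <;> omega

lemma cutVal_nonneg [Fintype V] [DecidableEq V] (y : Sym2 V → ℝ) (hy : ∀ e, 0 ≤ y e)
    (C : Finset V) : 0 ≤ cutVal y C :=
  Finset.sum_nonneg fun e _ => hy e

lemma cutVal_comb [Fintype V] [DecidableEq V] (x y : Sym2 V → ℝ) (ε : ℝ) (C : Finset V) :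
    cutVal (fun e => (x e + ε * y e) / 2) C = (cutVal x C + ε * cutVal y C) / 2 := by
  rw [cutVal, cutVal, cutVal, Finset.mul_sum, ← Finset.sum_add_distrib, ← Finset.sum_div]

theorem stmt12 [Fintype V] [DecidableEq V]
    (Q : Finset V) (hQne : Q.Nonempty) (hQeven : Even Q.card)
    (x y : Sym2 V → ℝ) (hx0 : ∀ e, 0 ≤ x e) (hy0 : ∀ e, 0 ≤ y e)
    (hHK2 : ∀ C : Finset V, C.Nonempty → C ≠ Finset.univ →
      Even (C ∩ Q).card → 2 ≤ cutVal x C)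
    (hHK1 : ∀ C : Finset V, Odd (C ∩ Q).card → 1 ≤ cutVal x C)
    (ε : ℝ) (hε : 0 < ε)
    (T : Finset (Sym2 V)) (hT : IsSpanningTree (⊤ : SimpleGraph V) T)
    (hnarrow : ∀ C : Finset V, C.Nonempty → C ≠ Finset.univ → cutVal x C < 2 →
      Odd (cutEdges C T).card ∨ 1 / ε ≤ cutVal y C) :
    (∀ e, 0 ≤ (x e + ε * y e) / 2) ∧
    ∀ C : Finset V, Odd (C ∩ symmDiff (oddVerts T) Q).card →
      1 ≤ cutVal (fun e => (x e + ε * y e) / 2) C := by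
  obtain ⟨hTsub, -, -⟩ := hT
  have hTnd : ∀ e ∈ T, ¬ e.IsDiag := by
    intro e he
    have h := hTsub he
    rw [SimpleGraph.edgeSet_top] at h
    exact h
  have hA : Even (oddVerts T).card := oddVerts_even T hTnd
  refine ⟨fun e => by have := hx0 e; have := mul_nonneg hε.le (hy0 e); linarith, ?_⟩
  intro C hC
  rw [show C ∩ symmDiff (oddVerts T) Q = symmDiff (C ∩ oddVerts T) (C ∩ Q) from
    inf_symmDiff_distrib_left _ _ _, odd_symmDiff_card] at hC
  rw [cutVal_comb]
  have hyC := cutVal_nonneg y hy0 C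
  have hεy : 0 ≤ ε * cutVal y C := mul_nonneg hε.le hyC
  rcases Nat.even_or_odd (C ∩ Q).card with hQeo | hQeo
  · have hodd : Odd (C ∩ oddVerts T).card := by
      rw [← Nat.not_odd_iff_even] at hQeo; tauto
    have hCne : C.Nonempty :=
      Finset.Nonempty.mono Finset.inter_subset_left (Finset.card_pos.mp hodd.pos)
    have hCuniv : C ≠ Finset.univ := by
      rintro rfl
      rw [Finset.univ_inter] at hodd
      exact (Nat.not_odd_iff_even.mpr hA) hodd
    have h2 := hHK2 C hCne hCuniv hQeo
    linarith
  · have hCne : C.Nonempty :=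
      Finset.Nonempty.mono Finset.inter_subset_left (Finset.card_pos.mp hQeo.pos)
    have hCuniv : C ≠ Finset.univ := by
      rintro rfl
      rw [Finset.univ_inter] at hQeo
      exact (Nat.not_odd_iff_even.mpr hQeven) hQeo
    have hx1 := hHK1 C hQeo
    by_cases h2 : 2 ≤ cutVal x C
    · linarith
    · rcases hnarrow C hCne hCuniv (lt_of_not_ge h2) with hoddcut | hy1
      · have hAodd : Odd (C ∩ oddVerts T).card := (parity_cut C T hTnd).mpr hoddcut
        exact absurd (iff_of_true hAodd hQeo) hC
      · have h1 : (1:ℝ) ≤ ε * cutVal y C := by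
          calc (1:ℝ) = ε * (1/ε) := by field_simp
          _ ≤ ε * cutVal y C := by gcongr
        linarith
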